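/- Let A be a weighted directed graph on n vertices that is weakly connected with total edge weight W = ∑ i, ∑ j, A i j > 0. Then the forward democracy coefficient satisfies η_f(A) ≥ 0, and η_f(A) = 0 if and only if A is simply forward influenced. -/

import Mathlib

open Matrix BigOperators

noncomputable section

variable {n : ℕ}

/-- Weighted in-degree vector. -/
def indeg (A : Matrix (Fin n) (Fin n) ℝ) (j : Fin n) : ℝ := ∑ i, A i j

/-- Weighted out-degree vector. -/
def outdeg (A : Matrix (Fin n) (Fin n) ℝ) (i : Fin n) : ℝ := ∑ j, A i j

/-- Weighted in-degree Laplacian `L = diag d - A`. -/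
def inLap (A : Matrix (Fin n) (Fin n) ℝ) : Matrix (Fin n) (Fin n) ℝ :=
  Matrix.diagonal (indeg A) - A

/-- Reachability: reflexive-transitive closure of the edge relation. -/
def Reaches (A : Matrix (Fin n) (Fin n) ℝ) : Fin n → Fin n → Prop :=
  Relation.ReflTransGen fun i j => 0 < A i j

/-- Weak connectivity. -/
def WeaklyConnected (A : Matrix (Fin n) (Fin n) ℝ) : Prop :=
  ∀ i j : Fin n, Relation.ReflTransGen (fun i j => 0 < A i j ∨ 0 < A j i) i j

/-- Strong connectivity. -/
def StronglyConnected (A : Matrix (Fin n) (Fin n) ℝ) : Prop :=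
  ∀ i j : Fin n, Reaches A i j

/-- Simply forward influenced graph. -/
def SimplyForwardInfluenced (A : Matrix (Fin n) (Fin n) ℝ) : Prop :=
  (∃ i, indeg A i = 0) ∧ (∃ i, indeg A i ≠ 0) ∧
    ∀ j, indeg A j ≠ 0 → ∃ i, indeg A i = 0 ∧ Reaches A i j

/-- A set of vertices with no incoming edges from outside. -/
def InClosed (A : Matrix (Fin n) (Fin n) ℝ) (S : Finset (Fin n)) : Prop :=
  ∀ i j : Fin n, i ∉ S → j ∈ S → A i j = 0

/-- Minimal source subgraph. -/
def MinSourceSubgraph (A : Matrix (Fin n) (Fin n) ℝ) (S : Finset (Fin n)) : Prop :=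
  S.Nonempty ∧ InClosed A S ∧ ∀ T ⊆ S, T.Nonempty → T ≠ S → ¬ InClosed A T

/-- Total edge weight. -/
def totalWeight (A : Matrix (Fin n) (Fin n) ℝ) : ℝ := ∑ i, ∑ j, A i j

/-- `g` is a forward hierarchical level vector: a minimizer of `‖Lᵀ x - d‖₂`. -/
def IsFHL (A : Matrix (Fin n) (Fin n) ℝ) (g : Fin n → ℝ) : Prop :=
  ∀ x : Fin n → ℝ,
    ∑ i, ((inLap A)ᵀ.mulVec g i - indeg A i) ^ 2 ≤
      ∑ i, ((inLap A)ᵀ.mulVec x i - indeg A i) ^ 2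

/-- Forward democracy coefficient, computed from a forward hierarchical level vector `g`. -/
def etaF (A : Matrix (Fin n) (Fin n) ℝ) (g : Fin n → ℝ) : ℝ :=
  1 - (∑ i, ∑ j, A i j * (g j - g i)) / totalWeight A

/-- Forward influence centrality of a vertex, from a forward hierarchical level vector `g`. -/
def vF (A : Matrix (Fin n) (Fin n) ℝ) (g : Fin n → ℝ) (i : Fin n) : ℝ :=
  if indeg A i = 0 then 1 else 1 - (∑ k, A k i * (g i - g k)) / indeg A i

/-- `b` is the orthogonal projection of `d` onto `ker L` (standard Euclidean inner product). -/
def IsProjKerL (A : Matrix (Fin n) (Fin n) ℝ) (b : Fin n → ℝ) : Prop :=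
  (inLap A).mulVec b = 0 ∧
    ∀ x : Fin n → ℝ, (inLap A).mulVec x = 0 → ∑ i, (indeg A i - b i) * x i = 0

lemma lap_apply (A : Matrix (Fin n) (Fin n) ℝ) (x : Fin n → ℝ) (i : Fin n) :
    (inLap A).mulVec x i = indeg A i * x i - ∑ j, A i j * x j := by
  simp only [inLap, mulVec, dotProduct, Matrix.sub_apply, diagonal_apply, sub_mul, ite_mul, zero_mul]
  rw [Finset.sum_sub_distrib]
  simp [Finset.sum_ite_eq]

lemma lapT_apply (A : Matrix (Fin n) (Fin n) ℝ) (x : Fin n → ℝ) (i : Fin n) :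
    (inLap A)ᵀ.mulVec x i = indeg A i * x i - ∑ j, A j i * x j := by
  simp only [inLap, mulVec, dotProduct, transpose_apply, Matrix.sub_apply, diagonal_apply, sub_mul, ite_mul, zero_mul]
  rw [Finset.sum_sub_distrib]
  simp [Finset.sum_ite_eq']

lemma sum_lap (A : Matrix (Fin n) (Fin n) ℝ) (x : Fin n → ℝ) :
    ∑ i, (inLap A).mulVec x i = 0 := by
  simp only [lap_apply]
  rw [Finset.sum_sub_distrib, Finset.sum_comm]
  simp [indeg, Finset.sum_mul]

/-- Adjoint identity: ⟨Bᵀ g, x⟩ = ⟨g, B x⟩. -/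
lemma adjoint_sum (B : Matrix (Fin n) (Fin n) ℝ) (u x : Fin n → ℝ) :
    ∑ i, Bᵀ.mulVec u i * x i = ∑ j, u j * B.mulVec x j := by
  simp only [mulVec, dotProduct, transpose_apply, Finset.sum_mul, Finset.mul_sum]
  rw [Finset.sum_comm]
  exact Finset.sum_congr rfl fun j _ => Finset.sum_congr rfl fun i _ => by ring

lemma firstorder_key (A : Matrix (Fin n) (Fin n) ℝ) (g : Fin n → ℝ) (hg : IsFHL A g)
    (y : Fin n → ℝ) :
    ∑ i, ((inLap A)ᵀ.mulVec g i - indeg A i) * (inLap A)ᵀ.mulVec y i = 0 := by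
  set M := (inLap A)ᵀ with hM
  set w := M.mulVec y with hw
  set c := ∑ i, (M.mulVec g i - indeg A i) * w i with hc
  set S := ∑ i, (w i) ^ 2 with hS
  have hS0 : 0 ≤ S := Finset.sum_nonneg fun i _ => sq_nonneg _
  have ht : ∀ t : ℝ, 0 ≤ 2 * t * c + t ^ 2 * S := by
    intro t
    have lin : ∀ i, M.mulVec (fun k => g k + t * y k) i = M.mulVec g i + t * w i := by
      intro i
      simp only [hw, mulVec, dotProduct]
      rw [Finset.mul_sum, ← Finset.sum_add_distrib]
      exact Finset.sum_congr rfl fun j _ => by ring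
    have h1 := hg (fun k => g k + t * y k)
    have h2 : ∑ i, (M.mulVec (fun k => g k + t * y k) i - indeg A i) ^ 2 =
        ∑ i, ((M.mulVec g i - indeg A i) ^ 2
          + (2 * t * ((M.mulVec g i - indeg A i) * w i) + t ^ 2 * (w i) ^ 2)) := by
      exact Finset.sum_congr rfl fun i _ => by rw [lin i]; ring
    rw [h2, Finset.sum_add_distrib, Finset.sum_add_distrib, ← Finset.mul_sum, ← Finset.mul_sum,
      ← hc, ← hS] at h1
    linarith
  by_contra hc0
  have h := ht (-c / (S + 1))
  have hS1 : (0:ℝ) < S + 1 := by linarith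
  have hc2 : 0 < c ^ 2 := by positivity
  field_simp at h
  nlinarith [mul_pos hc2 (show (0:ℝ) < S + 2 by linarith)]

lemma firstorder (A : Matrix (Fin n) (Fin n) ℝ) (g : Fin n → ℝ) (hg : IsFHL A g) (j : Fin n) :
    (inLap A).mulVec (fun i => (inLap A)ᵀ.mulVec g i - indeg A i) j = 0 := by
  have key := firstorder_key A g hg (Pi.single j 1)
  have hsingle : ∀ i, (inLap A)ᵀ.mulVec (Pi.single j 1) i = (inLap A)ᵀ i j := by
    intro i
    rw [mulVec_single]
    simp
  rw [Finset.sum_congr rfl (fun i _ => by rw [hsingle i])] at key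
  have h1 : (inLap A).mulVec (fun i => (inLap A)ᵀ.mulVec g i - indeg A i) j
      = ∑ i, ((inLap A)ᵀ.mulVec g i - indeg A i) * (inLap A)ᵀ i j := by
    simp only [mulVec, dotProduct, transpose_apply]
    exact Finset.sum_congr rfl fun i _ => by ring
  rw [h1, key]

lemma indeg_nonneg (A : Matrix (Fin n) (Fin n) ℝ) (hA : ∀ i j, 0 ≤ A i j) (i : Fin n) :
    0 ≤ indeg A i := Finset.sum_nonneg fun k _ => hA k i

lemma lap_abs (A : Matrix (Fin n) (Fin n) ℝ) (hA : ∀ i j, 0 ≤ A i j) (r : Fin n → ℝ)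
    (hr : ∀ i, (inLap A).mulVec r i = 0) (i : Fin n) :
    (inLap A).mulVec (fun k => |r k|) i = 0 := by
  have hle : ∀ i, (inLap A).mulVec (fun k => |r k|) i ≤ 0 := by
    intro i
    rw [lap_apply]
    have h1 : indeg A i * r i = ∑ j, A i j * r j := by
      have := hr i; rw [lap_apply] at this; linarith
    have h2 : indeg A i * |r i| = |∑ j, A i j * r j| := by
      rw [← h1, abs_mul, abs_of_nonneg (indeg_nonneg A hA i)]
    have h3 : |∑ j, A i j * r j| ≤ ∑ j, A i j * |r j| := by
      refine (Finset.abs_sum_le_sum_abs _ _).trans ?_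
      refine Finset.sum_le_sum fun j _ => ?_
      rw [abs_mul, abs_of_nonneg (hA i j)]
    linarith [h2 ▸ h3]
  have hsum : ∑ k, -((inLap A).mulVec (fun k => |r k|) k) = 0 := by
    rw [Finset.sum_neg_distrib, sum_lap, neg_zero]
  have := (Finset.sum_eq_zero_iff_of_nonneg
    (fun k _ => by simpa using hle k)).mp hsum i (Finset.mem_univ i)
  linarith [this]

lemma pos_step (A : Matrix (Fin n) (Fin n) ℝ) (hA : ∀ i j, 0 ≤ A i j) (μ : Fin n → ℝ)
    (hμ0 : ∀ i, 0 ≤ μ i) (hμ : ∀ i, (inLap A).mulVec μ i = 0) {i j : Fin n}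
    (hij : 0 < A i j) (hj : 0 < μ j) : 0 < μ i := by
  have h1 : indeg A i * μ i = ∑ k, A i k * μ k := by
    have := hμ i; rw [lap_apply] at this; linarith
  have h2 : A i j * μ j ≤ ∑ k, A i k * μ k :=
    Finset.single_le_sum (fun k _ => mul_nonneg (hA i k) (hμ0 k)) (Finset.mem_univ j)
  have h3 : 0 < indeg A i * μ i := by nlinarith
  rcases (hμ0 i).lt_or_eq with h | h
  · exact h
  · exfalso; rw [← h, mul_zero] at h3; exact lt_irrefl _ h3

lemma source_path (A : Matrix (Fin n) (Fin n) ℝ) (hA : ∀ i j, 0 ≤ A i j) (μ : Fin n → ℝ)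
    (hμ0 : ∀ i, 0 ≤ μ i) (hμ : ∀ i, (inLap A).mulVec μ i = 0) {i j : Fin n}
    (hi : indeg A i = 0) (hreach : Reaches A i j) : 0 < μ j → indeg A j = 0 := by
  induction hreach with
  | refl => exact fun _ => hi
  | @tail b c hab hbc ih =>
    intro hc
    have hb : 0 < μ b := pos_step A hA μ hμ0 hμ hbc hc
    have hdb : indeg A b = 0 := ih hb
    exfalso
    have h1 : indeg A b * μ b = ∑ k, A b k * μ k := by
      have := hμ b; rw [lap_apply] at this; linarith
    have h2 : A b c * μ c ≤ ∑ k, A b k * μ k :=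
      Finset.single_le_sum (fun k _ => mul_nonneg (hA b k) (hμ0 k)) (Finset.mem_univ c)
    nlinarith

open Classical in
lemma reach_from_source (A : Matrix (Fin n) (Fin n) ℝ) (hA : ∀ i j, 0 ≤ A i j)
    (hperp : ∀ x : Fin n → ℝ, (∀ i, (inLap A).mulVec x i = 0) → ∑ i, indeg A i * x i = 0)
    (j : Fin n) : ∃ i, indeg A i = 0 ∧ Reaches A i j := by
  by_contra hcon
  set U : Finset (Fin n) := Finset.univ.filter (fun v => ¬ ∃ i, indeg A i = 0 ∧ Reaches A i v)
    with hU
  have hjU : j ∈ U := by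
    simp only [hU, Finset.mem_filter, Finset.mem_univ, true_and]
    exact hcon
  have hclosed : ∀ a b : Fin n, a ∉ U → b ∈ U → A a b = 0 := by
    intro a b haU hbU
    by_contra hab
    have hab' : 0 < A a b := (hA a b).lt_of_ne (Ne.symm hab)
    simp only [hU, Finset.mem_filter, Finset.mem_univ, true_and, not_not] at haU
    obtain ⟨i, hi0, hir⟩ := haU
    simp only [hU, Finset.mem_filter, Finset.mem_univ, true_and] at hbU
    exact hbU ⟨i, hi0, hir.tail hab'⟩
  have hUne : U.Nonempty := ⟨j, hjU⟩
  -- submatrix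
  set N : Matrix {v // v ∈ U} {v // v ∈ U} ℝ := fun a b => inLap A a.1 b.1 with hN
  have hcol : ∀ b : {v // v ∈ U}, ∑ a : {v // v ∈ U}, N a b = 0 := by
    intro b
    have h1 : ∑ a : {v // v ∈ U}, N a b = ∑ a ∈ U, inLap A a b.1 := by
      rw [← Finset.sum_attach U (fun a => inLap A a b.1)]; rfl
    have h2 : ∑ a ∈ U, inLap A a b.1 = ∑ a, inLap A a b.1 := by
      refine Finset.sum_subset (Finset.subset_univ U) fun a _ haU => ?_
      have hab : A a b.1 = 0 := hclosed a b.1 haU b.2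
      have hne : a ≠ b.1 := fun h => haU (h ▸ b.2)
      simp [inLap, diagonal_apply, hne, hab]
    have h3 : ∑ a, inLap A a b.1 = 0 := by
      simp only [inLap, Matrix.sub_apply, Finset.sum_sub_distrib, diagonal_apply]
      rw [Finset.sum_ite_eq']
      simp [indeg]
    rw [h1, h2, h3]
  have hdetT : Nᵀ.det = 0 := by
    rw [← Matrix.exists_mulVec_eq_zero_iff]
    refine ⟨fun _ => 1, ?_, ?_⟩
    · intro h
      obtain ⟨v, hv⟩ := hUne
      have := congrFun h ⟨v, hv⟩
      simp at this
    · funext b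
      simp only [mulVec, dotProduct, transpose_apply, mul_one, Pi.zero_apply]
      exact hcol b
  have hdet : N.det = 0 := by rw [← Matrix.det_transpose]; exact hdetT
  obtain ⟨x, hx0, hx⟩ := Matrix.exists_mulVec_eq_zero_iff.mpr hdet
  set μ : Fin n → ℝ := fun k => if h : k ∈ U then x ⟨k, h⟩ else 0 with hμ
  have hμU : ∀ (k) (h : k ∈ U), μ k = x ⟨k, h⟩ := fun k h => by simp [hμ, h]
  have hμnU : ∀ k, k ∉ U → μ k = 0 := fun k h => by simp [hμ, h]
  have hμker : ∀ i, (inLap A).mulVec μ i = 0 := by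
    intro i
    have hsub : (inLap A).mulVec μ i = ∑ k ∈ U, inLap A i k * μ k := by
      rw [mulVec, dotProduct]
      refine (Finset.sum_subset (Finset.subset_univ U) fun k _ hk => ?_).symm
      rw [hμnU k hk, mul_zero]
    have hatt : ∑ k ∈ U, inLap A i k * μ k = ∑ k : {v // v ∈ U}, inLap A i k.1 * x k := by
      rw [← Finset.sum_attach U (fun k => inLap A i k * μ k)]
      exact Finset.sum_congr rfl fun k _ => by rw [hμU k.1 k.2]
    by_cases hi : i ∈ U
    · have := congrFun hx ⟨i, hi⟩
      simp only [mulVec, dotProduct, Pi.zero_apply] at this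
      rw [hsub, hatt]
      exact this
    · rw [hsub]
      refine Finset.sum_eq_zero fun k hk => ?_
      have hik : A i k = 0 := hclosed i k hi hk
      have hne : i ≠ k := fun h => hi (h ▸ hk)
      simp [inLap, diagonal_apply, hne, hik]
  have habs := lap_abs A hA μ hμker
  have hperp' := hperp (fun k => |μ k|) habs
  obtain ⟨a, ha⟩ : ∃ a : {v // v ∈ U}, x a ≠ 0 := by
    by_contra h
    push_neg at h
    exact hx0 (funext fun a => h a)
  have hall := (Finset.sum_eq_zero_iff_of_nonneg
    (fun k _ => mul_nonneg (indeg_nonneg A hA k) (abs_nonneg (μ k)))).mp hperp' a.1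
    (Finset.mem_univ a.1)
  have hμa : μ a.1 ≠ 0 := by rw [hμU a.1 a.2]; exact ha
  have hda : indeg A a.1 = 0 := by
    rcases mul_eq_zero.mp hall with h | h
    · exact h
    · exact absurd (abs_eq_zero.mp h) hμa
  have : a.1 ∈ U := a.2
  simp only [hU, Finset.mem_filter, Finset.mem_univ, true_and] at this
  exact this ⟨a.1, hda, Relation.ReflTransGen.refl⟩

theorem stmt_12 (hn : 0 < n) (A : Matrix (Fin n) (Fin n) ℝ)
    (hA : ∀ i j, 0 ≤ A i j) (hdiag : ∀ i, A i i = 0)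
    (hwc : WeaklyConnected A) (hW : 0 < totalWeight A)
    (g : Fin n → ℝ) (hg : IsFHL A g) :
    0 ≤ etaF A g ∧ (etaF A g = 0 ↔ SimplyForwardInfluenced A) := by
  set d : Fin n → ℝ := indeg A with hd
  set r : Fin n → ℝ := fun i => d i - (inLap A)ᵀ.mulVec g i with hr
  -- r is in the kernel of L
  have hrk : ∀ i, (inLap A).mulVec r i = 0 := by
    intro i
    have h := firstorder A g hg i
    simp only [mulVec, dotProduct] at h ⊢
    have : ∑ k, inLap A i k * r k
        = -∑ k, inLap A i k * ((inLap A)ᵀ.mulVec g k - indeg A k) := by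
      rw [← Finset.sum_neg_distrib]
      exact Finset.sum_congr rfl fun k _ => by
        simp only [hr, hd, mulVec, dotProduct]; ring
    simp only [mulVec, dotProduct] at this
    rw [this, h, neg_zero]
  -- ⟨Mg, x⟩ = 0 for kernel x
  have hperpMg : ∀ x : Fin n → ℝ, (∀ i, (inLap A).mulVec x i = 0) →
      ∑ i, (inLap A)ᵀ.mulVec g i * x i = 0 := by
    intro x hx
    rw [adjoint_sum]
    exact Finset.sum_eq_zero fun j _ => by rw [hx j, mul_zero]
  -- ⟨d, x⟩ = ⟨r, x⟩ for kernel x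
  have hdx : ∀ x : Fin n → ℝ, (∀ i, (inLap A).mulVec x i = 0) →
      ∑ i, d i * x i = ∑ i, r i * x i := by
    intro x hx
    have h1 : ∑ i, d i * x i = ∑ i, (r i * x i + (inLap A)ᵀ.mulVec g i * x i) := by
      exact Finset.sum_congr rfl fun i _ => by simp only [hr]; ring
    rw [h1, Finset.sum_add_distrib, hperpMg x hx, add_zero]
  -- the negative part of r
  set rm : Fin n → ℝ := fun i => (|r i| - r i) / 2 with hrm
  have hrm0 : ∀ i, 0 ≤ rm i := fun i =>
    div_nonneg (sub_nonneg.mpr (le_abs_self _)) (by norm_num)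
  have habs := lap_abs A hA r hrk
  have hrmker : ∀ i, (inLap A).mulVec rm i = 0 := by
    intro i
    have h1 := habs i
    have h2 := hrk i
    simp only [mulVec, dotProduct] at h1 h2 ⊢
    have : ∑ k, inLap A i k * rm k
        = ((∑ k, inLap A i k * |r k|) - ∑ k, inLap A i k * r k) / 2 := by
      rw [← Finset.sum_sub_distrib, Finset.sum_div]
      exact Finset.sum_congr rfl fun k _ => by simp only [hrm]; ring
    rw [this, h1, h2, sub_zero, zero_div]
  have hrmsq : ∀ i, r i * rm i = -(rm i) ^ 2 := by
    intro i
    rcases abs_cases (r i) with ⟨h1, _⟩ | ⟨h1, _⟩ <;> simp only [hrm, h1] <;> ring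
  have hrm_zero : ∀ i, rm i = 0 := by
    have h1 : ∑ i, d i * rm i = ∑ i, r i * rm i := hdx rm hrmker
    have h2 : 0 ≤ ∑ i, d i * rm i :=
      Finset.sum_nonneg fun i _ => mul_nonneg (indeg_nonneg A hA i) (hrm0 i)
    have h3 : ∑ i, r i * rm i = -∑ i, (rm i) ^ 2 := by
      rw [← Finset.sum_neg_distrib]
      exact Finset.sum_congr rfl fun i _ => hrmsq i
    have h4 : ∑ i, (rm i) ^ 2 = 0 := by
      have h5 : 0 ≤ ∑ i, (rm i) ^ 2 := Finset.sum_nonneg fun i _ => sq_nonneg _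
      linarith [h1 ▸ h2, h3]
    intro i
    have := (Finset.sum_eq_zero_iff_of_nonneg (fun i _ => sq_nonneg (rm i))).mp h4 i
      (Finset.mem_univ i)
    exact pow_eq_zero_iff (by norm_num) |>.mp this
  have hr0 : ∀ i, 0 ≤ r i := by
    intro i
    have h : (|r i| - r i) / 2 = 0 := hrm_zero i
    have h3 : |r i| - r i = 0 := by
      rcases div_eq_zero_iff.mp h with h' | h'
      · exact h'
      · norm_num at h'
    have h2 : |r i| = r i := by rw [sub_eq_zero] at h3; exact h3
    rw [← h2]
    exact abs_nonneg (r i)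
  -- sum identities
  have hWd : totalWeight A = ∑ i, d i := by
    rw [totalWeight]; refine Finset.sum_comm.trans ?_
    exact Finset.sum_congr rfl fun j _ => rfl
  have hMgsum : ∑ i, ∑ j, A i j * (g j - g i) = ∑ i, (inLap A)ᵀ.mulVec g i := by
    have e1 : ∑ i, ∑ j, A i j * (g j - g i)
        = (∑ i, ∑ j, A i j * g j) - ∑ i, ∑ j, A i j * g i := by
      rw [← Finset.sum_sub_distrib]
      exact Finset.sum_congr rfl fun i _ => by
        rw [← Finset.sum_sub_distrib]
        exact Finset.sum_congr rfl fun j _ => by ring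
    have e2 : ∑ i, ∑ j, A i j * g j = ∑ i, indeg A i * g i := by
      rw [Finset.sum_comm]
      exact Finset.sum_congr rfl fun j _ => by rw [indeg, Finset.sum_mul]
    have e3 : ∑ i, ∑ j, A j i * g j = ∑ i, ∑ j, A i j * g i := by rw [Finset.sum_comm]
    simp only [lapT_apply, Finset.sum_sub_distrib]
    rw [e1, e2, e3]
  have hsum_r : ∑ i, r i = totalWeight A - ∑ i, ∑ j, A i j * (g j - g i) := by
    simp only [hr, Finset.sum_sub_distrib, hMgsum, hWd, hd]
  have hWne : totalWeight A ≠ 0 := ne_of_gt hW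
  have heta : etaF A g = (∑ i, r i) / totalWeight A := by
    rw [etaF, hsum_r, sub_div, div_self hWne]
  constructor
  · rw [heta]
    exact div_nonneg (Finset.sum_nonneg fun i _ => hr0 i) hW.le
  constructor
  · -- etaF = 0 → SFI
    intro h0
    have hsum0 : ∑ i, r i = 0 := by
      rw [heta, div_eq_zero_iff] at h0
      exact h0.resolve_right hWne
    have hrz : ∀ i, r i = 0 :=
      fun i => (Finset.sum_eq_zero_iff_of_nonneg (fun i _ => hr0 i)).mp hsum0 i
        (Finset.mem_univ i)
    have hperp : ∀ x : Fin n → ℝ, (∀ i, (inLap A).mulVec x i = 0) →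
        ∑ i, indeg A i * x i = 0 := by
      intro x hx
      have := hdx x hx
      simp only [hd] at this
      rw [this]
      exact Finset.sum_eq_zero fun i _ => by rw [hrz i, zero_mul]
    have hrs := reach_from_source A hA hperp
    refine ⟨?_, ?_, fun j _ => hrs j⟩
    · obtain ⟨i, hi, -⟩ := hrs ⟨0, hn⟩
      exact ⟨i, hi⟩
    · by_contra hno
      push_neg at hno
      have : totalWeight A = 0 := by
        rw [hWd]
        exact Finset.sum_eq_zero fun i _ => hno i
      exact hWne this
  · -- SFI → etaF = 0
    rintro ⟨-, -, hsfi⟩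
    have hdr_zero : ∀ j, d j * r j = 0 := by
      intro j
      rcases eq_or_ne (d j) 0 with h | h
      · rw [h, zero_mul]
      · rcases (hr0 j).eq_or_lt with h2 | h2
        · rw [← h2, mul_zero]
        · obtain ⟨i, hi0, hir⟩ := hsfi j h
          have := source_path A hA r hr0 hrk hi0 hir h2
          exact absurd this h
    have h1 : ∑ i, d i * r i = 0 := Finset.sum_eq_zero fun i _ => hdr_zero i
    have h2 : ∑ i, r i * r i = 0 := by rw [← hdx r hrk]; exact h1
    have hrz : ∀ i, r i = 0 := by
      intro i
      have := (Finset.sum_eq_zero_iff_of_nonneg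
        (fun i _ => mul_self_nonneg (r i))).mp h2 i (Finset.mem_univ i)
      exact mul_self_eq_zero.mp this
    rw [heta]
    rw [Finset.sum_eq_zero fun i _ => hrz i, zero_div]
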